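/- Let k be a natural number and let Λ₁, Λ₂ be real linear combinations of τ₁, τ₂, τ₃ satisfying the equations k·⁅τ₃, Λ₁⁆ = Λ₂ and k·⁅τ₃, Λ₂⁆ = -Λ₁. If Λ₁ ≠ 0 or Λ₂ ≠ 0, then k = 1. (The Higgs field constraint for spherically symmetric SU(2) connections classified by λ_k has a nontrivial solution only for k = 1.) -/

import Mathlib

/-- `τ₁ = -(i/2)σ₁` where `σ₁ = [[0,1],[1,0]]` is the first Pauli matrix. -/
noncomputable def tau1 : Matrix (Fin 2) (Fin 2) ℂ :=
  (-(Complex.I / 2)) • !![0, 1; 1, 0]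

/-- `τ₂ = -(i/2)σ₂` where `σ₂ = [[0,-i],[i,0]]` is the second Pauli matrix. -/
noncomputable def tau2 : Matrix (Fin 2) (Fin 2) ℂ :=
  (-(Complex.I / 2)) • !![0, -Complex.I; Complex.I, 0]

/-- `τ₃ = -(i/2)σ₃` where `σ₃ = [[1,0],[0,-1]]` is the third Pauli matrix. -/
noncomputable def tau3 : Matrix (Fin 2) (Fin 2) ℂ :=
  (-(Complex.I / 2)) • !![1, 0; 0, -1]

lemma comm31 : ⁅tau3, tau1⁆ = tau2 := by
  simp only [tau1, tau2, tau3, Ring.lie_def]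
  ext i j
  fin_cases i <;> fin_cases j <;>
    simp [Matrix.mul_apply, Fin.sum_univ_two, Matrix.smul_apply] <;> ring_nf <;>
    linear_combination (-(Complex.I)/2) * Complex.I_sq

lemma comm32 : ⁅tau3, tau2⁆ = -tau1 := by
  simp only [tau1, tau2, tau3, Ring.lie_def]
  ext i j
  fin_cases i <;> fin_cases j <;>
    simp [Matrix.mul_apply, Fin.sum_univ_two, Matrix.smul_apply] <;> ring_nf <;>
    linear_combination (-(Complex.I)/2) * Complex.I_sq

lemma comm33 : ⁅tau3, tau3⁆ = 0 := by
  simp only [tau3, Ring.lie_def]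
  ext i j
  fin_cases i <;> fin_cases j <;>
    simp [Matrix.mul_apply, Fin.sum_univ_two, Matrix.smul_apply] <;> ring_nf <;>
    linear_combination (-(Complex.I)/2) * Complex.I_sq

lemma eqcoef (a b c : ℝ) (h : a • tau1 + b • tau2 + c • tau3 = 0) :
    a = 0 ∧ b = 0 ∧ c = 0 := by
  have h00 := congrFun (congrFun h 0) 0
  have h01 := congrFun (congrFun h 0) 1
  simp [tau1, tau2, tau3, Matrix.add_apply, Matrix.smul_apply, Complex.ext_iff] at h00 h01
  constructor
  · linarith [h01.2]
  constructor
  · nlinarith [h01.1, h01.2, Complex.I_mul_I]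
  · exact h00

theorem stmt_10 (k : ℕ) (Λ₁ Λ₂ : Matrix (Fin 2) (Fin 2) ℂ)
    (h1 : ∃ a b c : ℝ, Λ₁ = a • tau1 + b • tau2 + c • tau3)
    (h2 : ∃ a b c : ℝ, Λ₂ = a • tau1 + b • tau2 + c • tau3)
    (e1 : (k : ℝ) • ⁅tau3, Λ₁⁆ = Λ₂)
    (e2 : (k : ℝ) • ⁅tau3, Λ₂⁆ = -Λ₁)
    (hne : Λ₁ ≠ 0 ∨ Λ₂ ≠ 0) :
    k = 1 := by
  obtain ⟨a, b, c, rfl⟩ := h1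
  obtain ⟨a', b', c', rfl⟩ := h2
  letI := LieRing.ofAssociativeRing (A := Matrix (Fin 2) (Fin 2) ℂ)
  letI := LieAlgebra.ofAssociativeAlgebra (R := ℝ) (A := Matrix (Fin 2) (Fin 2) ℂ)
  rw [lie_add, lie_add, lie_smul, lie_smul, lie_smul, comm31, comm32, comm33] at e1 e2
  have E1 : ((-(k*b) - a') : ℝ) • tau1 + ((k*a - b') : ℝ) • tau2 + ((-c') : ℝ) • tau3 = 0 := by
    push_cast
    linear_combination (norm := module) e1
  have E2 : ((-(k*b') + a) : ℝ) • tau1 + ((k*a' + b) : ℝ) • tau2 + (c : ℝ) • tau3 = 0 := by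
    push_cast
    linear_combination (norm := module) e2
  obtain ⟨f1, f2, f3⟩ := eqcoef _ _ _ E1
  obtain ⟨g1, g2, g3⟩ := eqcoef _ _ _ E2
  by_contra hk
  have hk2 : ((k:ℝ)^2 : ℝ) ≠ 1 := by
    intro h
    have : (k:ℝ) = 1 := by nlinarith [Nat.cast_nonneg (α := ℝ) k]
    exact hk (by exact_mod_cast this)
  have ha : a = 0 := by
    have h0 : a * (1 - (k:ℝ)^2) = 0 := by linear_combination g1 - (k:ℝ)*f2
    rcases mul_eq_zero.mp h0 with h | h
    · exact h
    · exact absurd (by linarith : ((k:ℝ)^2 : ℝ) = 1) hk2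
  have hb : b = 0 := by
    have h0 : b * (1 - (k:ℝ)^2) = 0 := by linear_combination g2 + (k:ℝ)*f1
    rcases mul_eq_zero.mp h0 with h | h
    · exact h
    · exact absurd (by linarith : ((k:ℝ)^2 : ℝ) = 1) hk2
  rw [ha] at f2
  rw [hb] at f1
  have ha' : a' = 0 := by linarith
  have hb' : b' = 0 := by linarith
  have hc' : c' = 0 := by linarith
  rcases hne with h | h <;> apply h <;> simp [ha, hb, g3, ha', hb', hc']
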